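/- arXiv:2109.01515 — 2 statements merged into one kernel-verified Lean document; each statement's English description precedes it below -/
import Mathlib

section
/- Let r ∈ [0, ∞). The sequences a_n(r) and b_n(r) both converge as n → ∞, and they converge to the same limit γ̄_{h^{(r)}} (which lies in [0, 1/Γ(r+1)]). -/
open MeasureTheory Filter Topology

/-- The digamma function `ψ(x) = Γ'(x)/Γ(x)`. -/
noncomputable def digamma (x : ℝ) : ℝ := deriv Real.Gamma x / Real.Gamma x

/-- The rising factorial `x^{r̄} = Γ(x+r)/Γ(x)`. -/
noncomputable def rise (x r : ℝ) : ℝ := Real.Gamma (x + r) / Real.Gamma x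

/-- The analytic extension of the hyperharmonic numbers:
`h_x^{(r)} = (x^{r̄}/(x Γ(r)))(ψ(x+r) − ψ(r))` for `r > 0`, and `h_x^{(0)} = 1/x`. -/
noncomputable def hyp (r x : ℝ) : ℝ :=
  if r = 0 then 1 / x
  else rise x r / (x * Real.Gamma r) * (digamma (x + r) - digamma r)

/-- `y_n(r) = ∑_{k=1}^n h_k^{(r)}/k^r − ∫_1^n h_x^{(r)}/x^r dx`. -/
noncomputable def yseq (r : ℝ) (n : ℕ) : ℝ :=
  ∑ k ∈ Finset.Icc 1 n, hyp r k / (k : ℝ) ^ r - ∫ x in (1:ℝ)..(n:ℝ), hyp r x / x ^ r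

/-- `z_n(r) = ∑_{k=1}^{n-1} h_k^{(r)}/k^r − ∫_1^n h_x^{(r)}/x^r dx`. -/
noncomputable def zseq (r : ℝ) (n : ℕ) : ℝ :=
  ∑ k ∈ Finset.Icc 1 (n - 1), hyp r k / (k : ℝ) ^ r - ∫ x in (1:ℝ)..(n:ℝ), hyp r x / x ^ r

/-- `b_n(r) = ∑_{k=1}^n h_k^{(r)}/k^{r̄} − ∫_1^n h_x^{(r)}/x^{r̄} dx`. -/
noncomputable def bseq (r : ℝ) (n : ℕ) : ℝ :=
  ∑ k ∈ Finset.Icc 1 n, hyp r k / rise k r - ∫ x in (1:ℝ)..(n:ℝ), hyp r x / rise x r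

/-- `a_n(r) = ∑_{k=1}^{n-1} h_k^{(r)}/k^{r̄} − ∫_1^n h_x^{(r)}/x^{r̄} dx`. -/
noncomputable def aseq (r : ℝ) (n : ℕ) : ℝ :=
  ∑ k ∈ Finset.Icc 1 (n - 1), hyp r k / rise k r - ∫ x in (1:ℝ)..(n:ℝ), hyp r x / rise x r

lemma key_conv (f : ℝ → ℝ) (hanti : AntitoneOn f (Set.Ici 1))
    (hnonneg : ∀ x : ℝ, 1 ≤ x → 0 ≤ f x)
    (hzero : Tendsto (fun n : ℕ => f n) atTop (𝓝 0)) :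
    ∃ γ : ℝ, γ ∈ Set.Icc (0:ℝ) (f 1) ∧
      Tendsto (fun n : ℕ => ∑ k ∈ Finset.Icc 1 (n-1), f k - ∫ x in (1:ℝ)..(n:ℝ), f x)
        atTop (𝓝 γ) ∧
      Tendsto (fun n : ℕ => ∑ k ∈ Finset.Icc 1 n, f k - ∫ x in (1:ℝ)..(n:ℝ), f x)
        atTop (𝓝 γ) := by
  have intble : ∀ a b : ℝ, 1 ≤ a → 1 ≤ b → IntervalIntegrable f volume a b := by
    intro a b ha hb
    refine (hanti.mono ?_).intervalIntegrable
    intro x hx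
    exact le_trans (le_min ha hb) hx.1
  have hle : ∀ a : ℝ, 1 ≤ a → f (a+1) ≤ (∫ x in a..(a+1), f x) ∧ (∫ x in a..(a+1), f x) ≤ f a := by
    intro a ha
    constructor
    · have h1 : (∫ x in a..(a+1), (fun _ => f (a+1)) x) ≤ ∫ x in a..(a+1), f x := by
        apply intervalIntegral.integral_mono_on (by linarith) intervalIntegrable_const
          (intble a (a+1) ha (by linarith))
        intro x hx
        exact hanti (Set.mem_Ici.2 (le_trans ha hx.1)) (Set.mem_Ici.2 (by linarith)) hx.2
      simpa using h1
    · have h1 : (∫ x in a..(a+1), f x) ≤ ∫ x in a..(a+1), (fun _ => f a) x := by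
        apply intervalIntegral.integral_mono_on (by linarith)
          (intble a (a+1) ha (by linarith)) intervalIntegrable_const
        intro x hx
        exact hanti (Set.mem_Ici.2 ha) (Set.mem_Ici.2 (le_trans ha hx.1)) hx.1
      simpa using h1
  set bval : ℕ → ℝ := fun n => ∑ k ∈ Finset.Icc 1 n, f k - ∫ x in (1:ℝ)..(n:ℝ), f x with hbval
  set B : ℕ → ℝ := fun n => bval (n+1) with hB
  have hsplit : ∀ n : ℕ, 1 ≤ n →
      (∫ x in (1:ℝ)..((n:ℝ)+1), f x) = (∫ x in (1:ℝ)..(n:ℝ), f x) + ∫ x in (n:ℝ)..((n:ℝ)+1), f x := by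
    intro n hn
    have h1 : (1:ℝ) ≤ n := by exact_mod_cast hn
    exact (intervalIntegral.integral_add_adjacent_intervals (intble 1 n le_rfl h1)
      (intble n (n+1) h1 (by linarith))).symm
  have hBrec : ∀ n : ℕ, B (n+1) = B n + f ((n:ℝ)+2) - ∫ x in ((n:ℝ)+1)..((n:ℝ)+2), f x := by
    intro n
    have hsum : ∑ k ∈ Finset.Icc 1 (n+2), f k = (∑ k ∈ Finset.Icc 1 (n+1), f k) + f ((n:ℝ)+2) := by
      rw [Finset.sum_Icc_succ_top (by omega : 1 ≤ n+2)]
      push_cast; ring_nf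
    have hs := hsplit (n+1) (by omega)
    simp only [hB, hbval]
    push_cast at hs hsum ⊢
    rw [hsum, hs]
    ring
  have hBanti : Antitone B := by
    apply antitone_nat_of_succ_le
    intro n
    rw [hBrec n]
    have := (hle ((n:ℝ)+1) (by linarith [Nat.cast_nonneg (α := ℝ) n])).1
    have e : ((n:ℝ)+1)+1 = (n:ℝ)+2 := by ring
    rw [e] at this
    linarith
  have hBlow : ∀ n : ℕ, f ((n:ℝ)+1) ≤ B n := by
    intro n
    induction n with
    | zero =>
      simp only [hB, hbval]
      norm_num
    | succ n ih =>
      rw [hBrec n]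
      have h2 := (hle ((n:ℝ)+1) (by linarith [Nat.cast_nonneg (α := ℝ) n])).2
      have e : ((n:ℝ)+1)+1 = (n:ℝ)+2 := by ring
      rw [e] at h2
      push_cast
      have e2 : ((n:ℝ)+1)+1 = (n:ℝ)+2 := by ring
      rw [e2]
      linarith
  have hBnonneg : ∀ n : ℕ, 0 ≤ B n := fun n =>
    le_trans (hnonneg _ (by linarith [Nat.cast_nonneg (α := ℝ) n])) (hBlow n)
  have hbdd : BddBelow (Set.range B) := ⟨0, by rintro x ⟨n, rfl⟩; exact hBnonneg n⟩
  set γ : ℝ := ⨅ n, B n with hγ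
  have hBtendsto : Tendsto B atTop (𝓝 γ) := tendsto_atTop_ciInf hBanti hbdd
  have hγ0 : 0 ≤ γ := le_ciInf hBnonneg
  have hγ1 : γ ≤ f 1 := by
    have := ciInf_le hbdd 0
    have hB0 : B 0 = f 1 := by simp [hB, hbval]
    linarith
  have hbtendsto : Tendsto bval atTop (𝓝 γ) := (tendsto_add_atTop_iff_nat 1).1 hBtendsto
  refine ⟨γ, ⟨hγ0, hγ1⟩, ?_, hbtendsto⟩
  have hfn0 : Tendsto (fun n : ℕ => bval n - f n) atTop (𝓝 (γ - 0)) := hbtendsto.sub hzero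
  rw [sub_zero] at hfn0
  apply hfn0.congr'
  filter_upwards [eventually_ge_atTop 1] with n hn
  obtain ⟨m, rfl⟩ := Nat.exists_eq_add_of_le hn
  simp only [hbval, Nat.add_sub_cancel_left]
  rw [show 1+m = m+1 by omega, Finset.sum_Icc_succ_top (by omega : 1 ≤ m+1)]
  push_cast
  ring


lemma gamma_hasDeriv {x : ℝ} (hx : 0 < x) :
    HasDerivAt Real.Gamma (deriv Real.Gamma x) x := by
  refine (Real.differentiableAt_Gamma ?_).hasDerivAt
  intro m
  have : (0:ℝ) ≤ m := Nat.cast_nonneg m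
  intro h; rw [h] at hx; linarith

lemma digamma_rec {x : ℝ} (hx : 0 < x) : digamma (x + 1) = digamma x + 1 / x := by
  have hx0 : x ≠ 0 := ne_of_gt hx
  have hΓ : 0 < Real.Gamma x := Real.Gamma_pos_of_pos hx
  have h1 : HasDerivAt (fun y => Real.Gamma (y + 1)) (deriv Real.Gamma (x + 1)) x := by
    have := (gamma_hasDeriv (by linarith : (0:ℝ) < x + 1)).comp x
      ((hasDerivAt_id x).add_const 1)
    simp only [mul_one] at this; exact this
  have h2 : (fun y => Real.Gamma (y + 1)) =ᶠ[𝓝 x] fun y => y * Real.Gamma y := by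
    filter_upwards [eventually_ne_nhds hx0] with y hy
    exact Real.Gamma_add_one hy
  have h3 : HasDerivAt (fun y => y * Real.Gamma y) (deriv Real.Gamma (x + 1)) x :=
    h1.congr_of_eventuallyEq h2.symm
  have h4 : HasDerivAt (fun y => y * Real.Gamma y)
      (1 * Real.Gamma x + x * deriv Real.Gamma x) x :=
    (hasDerivAt_id x).mul (gamma_hasDeriv hx)
  have h5 : deriv Real.Gamma (x + 1) = Real.Gamma x + x * deriv Real.Gamma x := by
    have := h3.unique h4; linarith
  unfold digamma
  rw [h5, Real.Gamma_add_one hx0]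
  field_simp
  ring

lemma digamma_add_nat {x : ℝ} (hx : 0 < x) (N : ℕ) :
    digamma (x + N) = digamma x + ∑ k ∈ Finset.range N, 1 / (x + k) := by
  induction N with
  | zero => simp
  | succ N ih =>
    have h1 : x + (N + 1 : ℕ) = (x + N) + 1 := by push_cast; ring
    rw [h1, digamma_rec (by positivity), ih, Finset.sum_range_succ]
    ring

lemma digamma_mono {x y : ℝ} (hx : 0 < x) (hxy : x ≤ y) : digamma x ≤ digamma y := by
  have hm := Real.convexOn_log_Gamma.monotoneOn_deriv (fun z hz =>
    ((gamma_hasDeriv hz).log (ne_of_gt (Real.Gamma_pos_of_pos hz))).differentiableAt)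
  have e : ∀ z : ℝ, 0 < z → deriv (Real.log ∘ Real.Gamma) z = digamma z := by
    intro z hz
    exact ((gamma_hasDeriv hz).log (ne_of_gt (Real.Gamma_pos_of_pos hz))).deriv
  have hy : 0 < y := lt_of_lt_of_le hx hxy
  rw [← e x hx, ← e y hy]
  exact hm (Set.mem_Ioi.2 hx) (Set.mem_Ioi.2 hy) hxy

/-- the tail `ψ(x+r+N) − ψ(r+N)` tends to `0`. -/
lemma digamma_tail {r x : ℝ} (hr : 0 < r) (hx : 0 < x) :
    Tendsto (fun N : ℕ => digamma (x + r + N) - digamma (r + N)) atTop (𝓝 0) := by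
  set m : ℕ := ⌈x⌉₊ with hm
  have hxm : x ≤ m := Nat.le_ceil x
  have hub : ∀ N : ℕ, digamma (x + r + N) - digamma (r + N) ≤ (m : ℝ) / (r + N) := by
    intro N
    have hrN : 0 < r + N := by positivity
    have h1 : digamma (x + r + N) ≤ digamma (r + N + m) := by
      apply digamma_mono (by positivity)
      push_cast; linarith
    have h2 : digamma (r + N + m) = digamma (r + N) + ∑ k ∈ Finset.range m, 1 / (r + N + k) :=
      digamma_add_nat hrN m
    have h3 : ∑ k ∈ Finset.range m, 1 / (r + N + k) ≤ (m : ℝ) / (r + N) := by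
      calc ∑ k ∈ Finset.range m, 1 / (r + N + k) ≤ ∑ _k ∈ Finset.range m, 1 / (r + N) := by
            apply Finset.sum_le_sum
            intro k _
            apply one_div_le_one_div_of_le hrN
            have : (0:ℝ) ≤ k := Nat.cast_nonneg k
            linarith
        _ = (m : ℝ) / (r + N) := by
            rw [Finset.sum_const, Finset.card_range]
            push_cast; ring
    linarith
  have hlb : ∀ N : ℕ, 0 ≤ digamma (x + r + N) - digamma (r + N) := by
    intro N
    have : digamma (r + N) ≤ digamma (x + r + N) := by
      apply digamma_mono (by positivity); linarith
    linarith
  have hub0 : Tendsto (fun N : ℕ => (m : ℝ) / (r + N)) atTop (𝓝 0) := by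
    have h1 : Tendsto (fun N : ℕ => r + (N:ℝ)) atTop atTop :=
      tendsto_atTop_add_const_left atTop r tendsto_natCast_atTop_atTop
    have h2 : Tendsto (fun N : ℕ => (r + (N:ℝ))⁻¹) atTop (𝓝 0) := h1.inv_tendsto_atTop
    have h3 := h2.const_mul (m : ℝ)
    rw [mul_zero] at h3
    simpa [div_eq_mul_inv] using h3
  exact tendsto_of_tendsto_of_tendsto_of_le_of_le tendsto_const_nhds hub0 hlb hub


lemma digamma_diff_lim {r x : ℝ} (hr : 0 < r) (hx : 0 < x) :
    Tendsto (fun N : ℕ => ∑ k ∈ Finset.range N, (1 / (r + k) - 1 / (x + r + k))) atTop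
      (𝓝 (digamma (x + r) - digamma r)) := by
  have key : ∀ N : ℕ, ∑ k ∈ Finset.range N, (1 / (r + k) - 1 / (x + r + k)) =
      (digamma (x + r) - digamma r) - (digamma (x + r + N) - digamma (r + N)) := by
    intro N
    have h1 := digamma_add_nat hr N
    have h2 := digamma_add_nat (by positivity : (0:ℝ) < x + r) N
    rw [Finset.sum_sub_distrib]
    linarith
  have h := (tendsto_const_nhds (x := digamma (x + r) - digamma r)
    (f := atTop (α := ℕ))).sub (digamma_tail hr hx)
  rw [sub_zero] at h
  exact h.congr (fun N => (key N).symm)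

lemma f_eq {r x : ℝ} (hr : 0 < r) (hx : 0 < x) :
    hyp r x / rise x r = (digamma (x + r) - digamma r) / (x * Real.Gamma r) := by
  have h1 : Real.Gamma (x + r) > 0 := Real.Gamma_pos_of_pos (by positivity)
  have h2 : Real.Gamma x > 0 := Real.Gamma_pos_of_pos hx
  have h3 : rise x r ≠ 0 := by
    unfold rise; positivity
  unfold hyp
  rw [if_neg (ne_of_gt hr)]
  field_simp

lemma f_antitone {r : ℝ} (hr : 0 < r) :
    AntitoneOn (fun x => hyp r x / rise x r) (Set.Ici 1) := by
  intro x hx y hy hxy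
  simp only [Set.mem_Ici] at hx hy
  have hx0 : (0:ℝ) < x := by linarith
  have hy0 : (0:ℝ) < y := by linarith
  have hΓ : 0 < Real.Gamma r := Real.Gamma_pos_of_pos hr
  dsimp only
  rw [f_eq hr hx0, f_eq hr hy0]
  -- suffices x * Dy ≤ y * Dx
  have key : x * (digamma (y + r) - digamma r) ≤ y * (digamma (x + r) - digamma r) := by
    have hterm : ∀ k : ℕ, x * (1 / (r + k) - 1 / (y + r + k)) ≤
        y * (1 / (r + k) - 1 / (x + r + k)) := by
      intro k
      have hk : (0:ℝ) ≤ k := Nat.cast_nonneg k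
      have e : ∀ t : ℝ, 0 < t → 1 / (r + k) - 1 / (t + r + k) = t / ((r + k) * (t + r + k)) := by
        intro t ht
        have h1 : r + (k:ℝ) ≠ 0 := by positivity
        have h2 : t + r + (k:ℝ) ≠ 0 := by positivity
        field_simp
        ring
      rw [e x hx0, e y hy0]
      rw [mul_div_assoc', mul_div_assoc', mul_comm y x]
      gcongr
    have hxlim := (digamma_diff_lim hr hy0).const_mul x
    have hylim := (digamma_diff_lim hr hx0).const_mul y
    refine le_of_tendsto_of_tendsto' hxlim hylim ?_
    intro N
    simp only [Finset.mul_sum]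
    exact Finset.sum_le_sum fun k _ => hterm k
  rw [div_le_div_iff₀ (by positivity) (by positivity)]
  nlinarith [digamma_mono hr (by linarith : r ≤ x + r)]

lemma f_nonneg {r : ℝ} (hr : 0 < r) {x : ℝ} (hx : (1:ℝ) ≤ x) :
    0 ≤ hyp r x / rise x r := by
  have hx0 : (0:ℝ) < x := by linarith
  rw [f_eq hr hx0]
  have h1 : digamma r ≤ digamma (x + r) := digamma_mono hr (by linarith)
  have h2 : 0 < x * Real.Gamma r := mul_pos hx0 (Real.Gamma_pos_of_pos hr)
  exact div_nonneg (by linarith) h2.le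

lemma f_tendsto {r : ℝ} (hr : 0 < r) :
    Tendsto (fun n : ℕ => hyp r n / rise (n : ℝ) r) atTop (𝓝 0) := by
  have hu : Tendsto (fun k : ℕ => 1 / (r + (k:ℝ))) atTop (𝓝 0) := by
    have h1 : Tendsto (fun k : ℕ => r + (k:ℝ)) atTop atTop :=
      tendsto_atTop_add_const_left atTop r tendsto_natCast_atTop_atTop
    have h := h1.inv_tendsto_atTop; simp only [one_div]; exact h
  have hc := hu.cesaro
  have hΓ : 0 < Real.Gamma r := Real.Gamma_pos_of_pos hr
  have h3 := hc.const_mul (1 / Real.Gamma r)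
  rw [mul_zero] at h3
  apply h3.congr'
  filter_upwards [eventually_ge_atTop 1] with n hn
  have hn0 : (0:ℝ) < n := by exact_mod_cast hn
  rw [f_eq hr hn0]
  have : digamma ((n:ℝ) + r) = digamma r + ∑ k ∈ Finset.range n, 1 / (r + k) := by
    rw [add_comm (n:ℝ) r]
    exact digamma_add_nat hr n
  rw [this, add_sub_cancel_left, one_div, div_eq_mul_inv, mul_inv]
  ring

lemma f_one {r : ℝ} (hr : 0 < r) :
    hyp r 1 / rise 1 r = 1 / Real.Gamma (r + 1) := by
  rw [f_eq hr one_pos]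
  have h1 : digamma (1 + r) = digamma r + 1 / r := by
    rw [add_comm]; exact digamma_rec hr
  rw [h1, Real.Gamma_add_one (ne_of_gt hr)]
  have hΓ : 0 < Real.Gamma r := Real.Gamma_pos_of_pos hr
  field_simp
  ring


theorem ab_tendsto (r : ℝ) (hr : 0 ≤ r) :
    ∃ γbar : ℝ, γbar ∈ Set.Icc (0 : ℝ) (1 / Real.Gamma (r + 1)) ∧
      Tendsto (aseq r) atTop (𝓝 γbar) ∧ Tendsto (bseq r) atTop (𝓝 γbar) := by
  rcases hr.eq_or_lt with rfl | hrpos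
  · -- case r = 0
    have feq : ∀ x : ℝ, 0 < x → hyp 0 x / rise x 0 = 1 / x := by
      intro x hx
      have hΓ : Real.Gamma x ≠ 0 := (Real.Gamma_pos_of_pos hx).ne'
      simp [hyp, rise, hΓ]
    have h1 : AntitoneOn (fun x => hyp 0 x / rise x 0) (Set.Ici 1) := by
      intro x hx y hy hxy
      simp only [Set.mem_Ici] at hx hy
      dsimp only
      rw [feq x (by linarith), feq y (by linarith)]
      apply one_div_le_one_div_of_le (by linarith) hxy
    have h2 : ∀ x : ℝ, 1 ≤ x → 0 ≤ hyp 0 x / rise x 0 := by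
      intro x hx
      rw [feq x (by linarith)]
      positivity
    have h3 : Tendsto (fun n : ℕ => hyp 0 n / rise (n:ℝ) 0) atTop (𝓝 0) := by
      have h4 : Tendsto (fun n : ℕ => 1 / (n:ℝ)) atTop (𝓝 0) := by
        have h := tendsto_natCast_atTop_atTop (R := ℝ).inv_tendsto_atTop; simp only [one_div]; exact h
      apply h4.congr'
      filter_upwards [eventually_ge_atTop 1] with n hn
      rw [feq n (by exact_mod_cast hn)]
    obtain ⟨γ, hγ, ha, hb⟩ := key_conv (fun x => hyp 0 x / rise x 0) h1 h2 h3
    have hone : hyp 0 1 / rise 1 0 = 1 / Real.Gamma (0 + 1) := by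
      rw [feq 1 one_pos]
      norm_num [Real.Gamma_one]
    rw [hone] at hγ
    exact ⟨γ, hγ, by unfold aseq; exact ha, by unfold bseq; exact hb⟩
  · -- case 0 < r
    obtain ⟨γ, hγ, ha, hb⟩ := key_conv (fun x => hyp r x / rise x r) (f_antitone hrpos)
      (fun x hx => f_nonneg hrpos hx) (f_tendsto hrpos)
    rw [show hyp r 1 / rise 1 r = 1 / Real.Gamma (r + 1) from f_one hrpos] at hγ
    exact ⟨γ, hγ, by unfold aseq; exact ha, by unfold bseq; exact hb⟩
end

section
/- Let r ∈ [0, ∞) and let γ̄_{h^{(r)}} be the common limit of the sequences a_n(r) and b_n(r). For each natural number n ≥ 1, with C(n,r) = h_n^{(r)}/n^{r̄} − ∫_n^{n+1} h_x^{(r)}/x^{r̄} dx and D(n,r) = ∫_n^{n+1} h_x^{(r)}/x^{r̄} dx, one has C(n,r) < γ̄_{h^{(r)}} − a_n(r) < C(n,r) + h_{n+1}^{(r)}/(n+1)^{r̄}, and D(n,r) − h_{n+1}^{(r)}/(n+1)^{r̄} < b_n(r) − γ̄_{h^{(r)}} < D(n,r). -/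
open MeasureTheory Filter Topology

section Aux
open Real Set

noncomputable def psi (x : ℝ) : ℝ := deriv (Real.log ∘ Real.Gamma) x

lemma diffGamma {x : ℝ} (hx : 0 < x) : DifferentiableAt ℝ Real.Gamma x :=
  Real.differentiableAt_Gamma fun m => by
    have : (0:ℝ) ≤ m := Nat.cast_nonneg m; intro h; rw [h] at hx; linarith

lemma diffLogGamma {x : ℝ} (hx : 0 < x) : DifferentiableAt ℝ (Real.log ∘ Real.Gamma) x :=
  (diffGamma hx).log (Real.Gamma_pos_of_pos hx).ne'

lemma psi_eq_digamma {x : ℝ} (hx : 0 < x) : psi x = deriv Real.Gamma x / Real.Gamma x := by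
  rw [psi, Function.comp_def, deriv.log (diffGamma hx) (Real.Gamma_pos_of_pos hx).ne']

lemma psi_rec {x : ℝ} (hx : 0 < x) : psi (x + 1) = psi x + 1 / x := by
  have h_rec : ∀ y : ℝ, 0 < y → (Real.log ∘ Real.Gamma) (y + 1)
      = (Real.log ∘ Real.Gamma) y + Real.log y := by
    intro y hy
    simp only [Function.comp_apply, Real.Gamma_add_one hy.ne',
      Real.log_mul hy.ne' (Real.Gamma_pos_of_pos hy).ne', add_comm]
  rw [psi, psi, ← deriv_comp_add_const, one_div, ← Real.deriv_log,
    ← deriv_add (diffLogGamma hx) (Real.differentiableAt_log hx.ne')]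
  apply Filter.EventuallyEq.deriv_eq
  filter_upwards [eventually_gt_nhds hx] using h_rec

lemma psi_mono {s t : ℝ} (hs : 0 < s) (hst : s ≤ t) : psi s ≤ psi t := by
  rcases eq_or_lt_of_le hst with rfl | h
  · exact le_refl _
  · have hc := Real.convexOn_log_Gamma
    exact (hc.deriv_le_slope (mem_Ioi.mpr hs) (mem_Ioi.mpr (hs.trans h)) h
      (diffLogGamma hs)).trans
      (hc.slope_le_deriv (mem_Ioi.mpr hs) (mem_Ioi.mpr (hs.trans h)) h
      (diffLogGamma (hs.trans h)))

lemma psi_add_nat {x : ℝ} (hx : 0 < x) (n : ℕ) :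
    psi (x + n) = psi x + ∑ k ∈ Finset.range n, 1 / (x + k) := by
  induction n with
  | zero => simp
  | succ n ih =>
    have : x + (n + 1 : ℕ) = (x + n) + 1 := by push_cast; ring
    rw [this, psi_rec (by positivity), ih, Finset.sum_range_succ]
    ring

lemma key_bound {a b : ℝ} (ha : 0 < a) (hb : 0 < b) (m : ℕ) (hm : b ≤ a + m) (n : ℕ) (hn : 1 ≤ n) :
    psi (b + n) - psi (a + n) ≤ m / n := by
  have hn' : (0:ℝ) < n := by exact_mod_cast hn
  have h1 : psi (b + n) ≤ psi ((a + n) + m) := by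
    apply psi_mono (by positivity) (by push_cast; linarith)
  have h2 : psi ((a + n) + m) = psi (a + n) + ∑ k ∈ Finset.range m, 1 / (a + n + k) :=
    psi_add_nat (by positivity) m
  have h3 : ∑ k ∈ Finset.range m, 1 / (a + n + k) ≤ m / n := by
    calc ∑ k ∈ Finset.range m, 1 / (a + n + k) ≤ ∑ _k ∈ Finset.range m, 1 / (n:ℝ) := by
          apply Finset.sum_le_sum
          intro k _
          apply one_div_le_one_div_of_le hn'
          have : (0:ℝ) ≤ k := Nat.cast_nonneg k
          linarith
      _ = m / n := by rw [Finset.sum_const, Finset.card_range]; ring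
  linarith

lemma tendsto_T {u v : ℝ} (hu : 0 < u) (hv : 0 < v) :
    Tendsto (fun n : ℕ => ∑ k ∈ Finset.range n, (1/(u+k) - 1/(v+k))) atTop
      (𝓝 (psi v - psi u)) := by
  obtain ⟨m, hm⟩ := exists_nat_ge (max (v - u) (u - v))
  have hm1 : v ≤ u + m := by have := le_max_left (v-u) (u-v); linarith
  have hm2 : u ≤ v + m := by have := le_max_right (v-u) (u-v); linarith
  have key : ∀ n : ℕ, ∑ k ∈ Finset.range n, (1/(u+k) - 1/(v+k))
      = (psi v - psi u) + (psi (u + n) - psi (v + n)) := by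
    intro n
    have h1 := psi_add_nat hu n
    have h2 := psi_add_nat hv n
    rw [Finset.sum_sub_distrib]
    linarith
  simp only [key]
  have h0 : Tendsto (fun n : ℕ => psi (u + n) - psi (v + n)) atTop (𝓝 0) := by
    refine squeeze_zero_norm' (a := fun n : ℕ => (m:ℝ) / n) ?_ (tendsto_const_div_atTop_nhds_zero_nat (m:ℝ))
    · filter_upwards [eventually_ge_atTop 1] with n hn
      rw [Real.norm_eq_abs, abs_le]
      constructor
      · have := key_bound hu hv m hm1 n hn
        linarith
      · exact key_bound hv hu m hm2 n hn
  simpa using tendsto_const_nhds.add h0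

lemma key_strict {r x y : ℝ} (hr : 0 < r) (hx : 0 < x) (hxy : x < y) :
    x * (psi (y + r) - psi r) < y * (psi (x + r) - psi r) := by
  have hy : 0 < y := hx.trans hxy
  set t : ℕ → ℝ := fun k =>
    y * (1/(r+k) - 1/(x+r+k)) - x * (1/(r+k) - 1/(y+r+k)) with ht
  set Δ : ℕ → ℝ := fun n => ∑ k ∈ Finset.range n, t k with hΔdef
  have hT1 := (tendsto_T hr (by positivity : (0:ℝ) < x + r)).const_mul y
  have hT2 := (tendsto_T hr (by positivity : (0:ℝ) < y + r)).const_mul x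
  have hΔ : Tendsto Δ atTop
      (𝓝 (y * (psi (x+r) - psi r) - x * (psi (y+r) - psi r))) := by
    have := hT1.sub hT2
    convert this using 2 with n
    rw [hΔdef]
    simp only [ht, mul_sub, Finset.sum_sub_distrib, Finset.mul_sum]
  have hpos : ∀ k : ℕ, 0 < t k := by
    intro k
    have ha : (0:ℝ) < r + k := by positivity
    have h1 : (0:ℝ) < x + r + k := by positivity
    have h2 : (0:ℝ) < y + r + k := by positivity
    have : t k = x*y*(y-x) / ((r+k)*(x+r+k)*(y+r+k)) := by
      rw [ht]
      field_simp
      ring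
    rw [this]
    have : 0 < y - x := by linarith
    positivity
  have hmono : Monotone Δ := by
    apply monotone_nat_of_le_succ
    intro n
    rw [hΔdef]
    simp only [Finset.sum_range_succ]
    linarith [hpos n]
  have h1 := hmono.ge_of_tendsto hΔ 1
  have hΔ1 : Δ 1 = t 0 := by rw [hΔdef]; simp
  have := hpos 0
  rw [hΔ1] at h1
  linarith

lemma rise_pos {x r : ℝ} (hx : 0 < x) (hr : 0 ≤ r) : 0 < rise x r :=
  div_pos (Real.Gamma_pos_of_pos (by linarith)) (Real.Gamma_pos_of_pos hx)

lemma F_eq_pos {r x : ℝ} (hr : 0 < r) (hx : 0 < x) :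
    hyp r x / rise x r = (psi (x + r) - psi r) / (x * Real.Gamma r) := by
  have h1 : digamma (x + r) = psi (x + r) := (psi_eq_digamma (by positivity)).symm
  have h2 : digamma r = psi r := (psi_eq_digamma hr).symm
  have h3 : rise x r ≠ 0 := (rise_pos hx hr.le).ne'
  rw [hyp, if_neg hr.ne', h1, h2]
  field_simp

lemma F_eq_zero {x : ℝ} (hx : 0 < x) : hyp 0 x / rise x 0 = 1 / x := by
  have h : rise x 0 = 1 := by
    rw [rise, add_zero, div_self (Real.Gamma_pos_of_pos hx).ne']
  rw [hyp, if_pos rfl, h, div_one]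

lemma F_strictAnti (r : ℝ) (hr : 0 ≤ r) :
    StrictAntiOn (fun x => hyp r x / rise x r) (Set.Ici 1) := by
  intro x hx y hy hxy
  have hx1 : (1:ℝ) ≤ x := hx
  have hx0 : (0:ℝ) < x := by linarith
  have hy0 : (0:ℝ) < y := by linarith [hx0, hxy]
  rcases eq_or_lt_of_le hr with rfl | hr'
  · simp only [F_eq_zero hx0, F_eq_zero hy0]
    exact one_div_lt_one_div_of_lt hx0 hxy
  · simp only [F_eq_pos hr' hx0, F_eq_pos hr' hy0]
    have hΓ : 0 < Real.Gamma r := Real.Gamma_pos_of_pos hr'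
    rw [div_lt_div_iff₀ (by positivity) (by positivity)]
    have := key_strict hr' hx0 hxy
    nlinarith

lemma F_intble (r : ℝ) (hr : 0 ≤ r) {a b : ℝ} (ha : 1 ≤ a) (hb : 1 ≤ b) :
    IntervalIntegrable (fun x => hyp r x / rise x r) volume a b := by
  apply AntitoneOn.intervalIntegrable
  exact ((F_strictAnti r hr).antitoneOn).mono (fun x hx => le_trans (le_min ha hb) hx.1)

lemma int_bounds (r : ℝ) (hr : 0 ≤ r) {m : ℝ} (hm : 1 ≤ m) :
    hyp r (m+1) / rise (m+1) r < (∫ x in m..(m+1), hyp r x / rise x r)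
    ∧ (∫ x in m..(m+1), hyp r x / rise x r) < hyp r m / rise m r := by
  set F := fun x => hyp r x / rise x r with hF
  have hanti : AntitoneOn F (Set.Ici 1) := (F_strictAnti r hr).antitoneOn
  have hsplit : (∫ x in m..(m+1/2), F x) + (∫ x in (m+1/2)..(m+1), F x)
      = ∫ x in m..(m+1), F x :=
    intervalIntegral.integral_add_adjacent_intervals
      (F_intble r hr hm (by linarith)) (F_intble r hr (by linarith) (by linarith))
  have mem1 : m ∈ Set.Ici (1:ℝ) := hm
  have mem2 : m + 1/2 ∈ Set.Ici (1:ℝ) := by simp; linarith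
  have mem3 : m + 1 ∈ Set.Ici (1:ℝ) := by simp; linarith
  have hu1 : (∫ x in m..(m+1/2), F x) ≤ (1/2) * F m := by
    have h := intervalIntegral.integral_mono_on (by linarith : m ≤ m + 1/2)
      (F_intble r hr hm (by linarith)) (intervalIntegrable_const (c := F m))
      (fun x hx => hanti mem1 (by simp at hx ⊢; linarith [hx.1]) hx.1)
    rwa [intervalIntegral.integral_const, smul_eq_mul,
      show m + 1/2 - m = 1/2 by ring] at h
  have hu2 : (∫ x in (m+1/2)..(m+1), F x) ≤ (1/2) * F (m+1/2) := by
    have h := intervalIntegral.integral_mono_on (by linarith : m + 1/2 ≤ m + 1)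
      (F_intble r hr (by linarith) (by linarith)) (intervalIntegrable_const (c := F (m+1/2)))
      (fun x hx => hanti mem2 (by simp at hx ⊢; linarith [hx.1]) hx.1)
    rwa [intervalIntegral.integral_const, smul_eq_mul,
      show m + 1 - (m + 1/2) = 1/2 by ring] at h
  have hl1 : (1/2) * F (m+1/2) ≤ (∫ x in m..(m+1/2), F x) := by
    have h := intervalIntegral.integral_mono_on (by linarith : m ≤ m + 1/2)
      (intervalIntegrable_const (c := F (m+1/2))) (F_intble r hr hm (by linarith))
      (fun x hx => hanti (by simp at hx ⊢; linarith [hx.1]) mem2 hx.2)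
    rwa [intervalIntegral.integral_const, smul_eq_mul,
      show m + 1/2 - m = 1/2 by ring] at h
  have hl2 : (1/2) * F (m+1) ≤ (∫ x in (m+1/2)..(m+1), F x) := by
    have h := intervalIntegral.integral_mono_on (by linarith : m + 1/2 ≤ m + 1)
      (intervalIntegrable_const (c := F (m+1))) (F_intble r hr (by linarith) (by linarith))
      (fun x hx => hanti (by simp at hx ⊢; linarith [hx.1]) mem3 hx.2)
    rwa [intervalIntegral.integral_const, smul_eq_mul,
      show m + 1 - (m + 1/2) = 1/2 by ring] at h
  have hstrict1 : F (m+1/2) < F m := F_strictAnti r hr mem1 mem2 (by linarith)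
  have hstrict2 : F (m+1) < F (m+1/2) := F_strictAnti r hr mem2 mem3 (by linarith)
  constructor
  · rw [← hsplit]; linarith
  · rw [← hsplit]; linarith

lemma bseq_eq_aseq (r : ℝ) (n : ℕ) (hn : 1 ≤ n) :
    bseq r n = aseq r n + hyp r n / rise n r := by
  obtain ⟨p, rfl⟩ : ∃ p, n = p + 1 := ⟨n - 1, (Nat.succ_pred_eq_of_pos hn).symm⟩
  rw [bseq, aseq, Finset.sum_Icc_succ_top (by omega : 1 ≤ p + 1)]
  simp only [Nat.add_sub_cancel]
  ring

lemma aseq_succ_eq (r : ℝ) (hr : 0 ≤ r) (n : ℕ) (hn : 1 ≤ n) :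
    aseq r (n+1) = bseq r n - ∫ x in (n:ℝ)..((n:ℝ)+1), hyp r x / rise x r := by
  have hn1 : (1:ℝ) ≤ n := by exact_mod_cast hn
  rw [aseq, bseq]
  have hsplit : (∫ x in (1:ℝ)..(n:ℝ), hyp r x / rise x r)
      + (∫ x in (n:ℝ)..((n:ℝ)+1), hyp r x / rise x r)
      = ∫ x in (1:ℝ)..((n:ℝ)+1), hyp r x / rise x r :=
    intervalIntegral.integral_add_adjacent_intervals
      (F_intble r hr le_rfl hn1) (F_intble r hr hn1 (by linarith))
  simp only [Nat.add_sub_cancel]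
  push_cast
  linarith

lemma aseq_lt_succ (r : ℝ) (hr : 0 ≤ r) (n : ℕ) (hn : 1 ≤ n) :
    aseq r n < aseq r (n+1) := by
  have hn1 : (1:ℝ) ≤ n := by exact_mod_cast hn
  have e1 := bseq_eq_aseq r n hn
  have e2 := aseq_succ_eq r hr n hn
  have hi := (int_bounds r hr hn1).2
  linarith

lemma bseq_succ_lt (r : ℝ) (hr : 0 ≤ r) (n : ℕ) (hn : 1 ≤ n) :
    bseq r (n+1) < bseq r n := by
  have hn1 : (1:ℝ) ≤ n := by exact_mod_cast hn
  have e3 := bseq_eq_aseq r (n+1) (by omega)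
  have e2 := aseq_succ_eq r hr n hn
  have hi := (int_bounds r hr hn1).1
  push_cast at e3
  linarith


end Aux

theorem ab_estimates (r : ℝ) (hr : 0 ≤ r) (γbar : ℝ)
    (ha : Tendsto (aseq r) atTop (𝓝 γbar)) (hb : Tendsto (bseq r) atTop (𝓝 γbar))
    (n : ℕ) (hn : 1 ≤ n) :
    let C : ℝ := hyp r n / rise n r - ∫ x in (n : ℝ)..(n + 1 : ℝ), hyp r x / rise x r
    let D : ℝ := ∫ x in (n : ℝ)..(n + 1 : ℝ), hyp r x / rise x r
    (C < γbar - aseq r n ∧ γbar - aseq r n < C + hyp r (n + 1) / rise ((n : ℝ) + 1) r) ∧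
    (D - hyp r (n + 1) / rise ((n : ℝ) + 1) r < bseq r n - γbar ∧ bseq r n - γbar < D) := by
  intro C D
  have hamono : ∀ m, 1 ≤ m → ∀ k, m ≤ k → aseq r m ≤ aseq r k := by
    intro m hm k hk
    induction k, hk using Nat.le_induction with
    | base => exact le_rfl
    | succ k hk ih => exact ih.trans (aseq_lt_succ r hr k (le_trans hm hk)).le
  have hbmono : ∀ m, 1 ≤ m → ∀ k, m ≤ k → bseq r k ≤ bseq r m := by
    intro m hm k hk
    induction k, hk using Nat.le_induction with
    | base => exact le_rfl
    | succ k hk ih => exact (bseq_succ_lt r hr k (le_trans hm hk)).le.trans ih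
  have halim : ∀ m, 1 ≤ m → aseq r m < γbar := by
    intro m hm
    have h2 : aseq r (m+1) ≤ γbar :=
      ge_of_tendsto ha (Filter.eventually_atTop.mpr
        ⟨m+1, fun k hk => hamono (m+1) (by omega) k hk⟩)
    exact lt_of_lt_of_le (aseq_lt_succ r hr m hm) h2
  have hblim : ∀ m, 1 ≤ m → γbar < bseq r m := by
    intro m hm
    have h2 : γbar ≤ bseq r (m+1) :=
      le_of_tendsto hb (Filter.eventually_atTop.mpr
        ⟨m+1, fun k hk => hbmono (m+1) (by omega) k hk⟩)
    exact lt_of_le_of_lt h2 (bseq_succ_lt r hr m hm)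
  have hC : C = hyp r n / rise n r - ∫ x in (n : ℝ)..((n:ℝ) + 1), hyp r x / rise x r := rfl
  have hD : D = ∫ x in (n : ℝ)..((n:ℝ) + 1), hyp r x / rise x r := rfl
  have e1 := bseq_eq_aseq r n hn
  have e2 := aseq_succ_eq r hr n hn
  have e3 := bseq_eq_aseq r (n+1) (by omega)
  push_cast at e3
  have h1 := halim (n+1) (by omega)
  have h2 := hblim (n+1) (by omega)
  rw [hC, hD]
  refine ⟨⟨?_, ?_⟩, ?_, ?_⟩ <;> linarith
end
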